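/- For all positive integers m and n, tₙ⋆(1_m) = (1/m) · ∑_{i=0}^{m-1} tₙ⋆(1_i)·tₙ(m-i), where tₙ⋆ is the multiple t-harmonic star sum and tₙ(k) = ∑_{j=1}^n 1/(2j-1)^k. -/

import Mathlib

open Finset

/-- Multiple t-harmonic star sum with `k` ones:
`tₙ⋆(1_k) = ∑_{n ≥ n₁ ≥ ⋯ ≥ n_k ≥ 1} ∏ 1/(2n_j-1)`. -/
noncomputable def tstarharm : ℕ → ℕ → ℝ
  | 0, _ => 1
  | (k+1), n => ∑ j ∈ Finset.Icc 1 n, (1 / (2 * (j : ℝ) - 1)) * tstarharm k j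

/-- `tₙ(k) = ∑_{j=1}^n 1/(2j-1)^k`. -/
noncomputable def tpow (k n : ℕ) : ℝ := ∑ j ∈ Finset.Icc 1 n, 1 / (2 * (j : ℝ) - 1) ^ k

lemma tstar_nil (k : ℕ) : tstarharm (k+1) 0 = 0 := by simp [tstarharm]

lemma tpow_nil (k : ℕ) : tpow k 0 = 0 := by simp [tpow]

lemma tstar_succ (k n : ℕ) :
    tstarharm (k+1) (n+1)
      = tstarharm (k+1) n + (1 / (2 * ((n:ℝ)+1) - 1)) * tstarharm k (n+1) := by
  show (∑ j ∈ Finset.Icc 1 (n+1), (1 / (2 * (j : ℝ) - 1)) * tstarharm k j) = _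
  rw [Finset.sum_Icc_succ_top (by omega)]
  push_cast
  rfl

lemma tpow_succ (k n : ℕ) :
    tpow k (n+1) = tpow k n + (1 / (2 * ((n:ℝ)+1) - 1)) ^ k := by
  unfold tpow
  rw [Finset.sum_Icc_succ_top (by omega)]
  push_cast
  rw [one_div, one_div, inv_pow]

lemma aux : ∀ n m : ℕ,
    (m:ℝ) * tstarharm m n = ∑ i ∈ range m, tstarharm i n * tpow (m - i) n := by
  intro n
  induction n with
  | zero =>
    intro m
    cases m with
    | zero => simp
    | succ m => simp [tstar_nil, tpow_nil]
  | succ n ihn =>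
    intro m
    induction m with
    | zero => simp
    | succ m ihm =>
      set x : ℝ := 1 / (2 * ((n:ℝ)+1) - 1) with hx
      -- abbreviations
      have key : ∑ i ∈ range (m+1), tstarharm i (n+1) * tpow (m+1-i) (n+1)
          = ∑ i ∈ range (m+1), tstarharm i (n+1) * tpow (m+1-i) n
            + ∑ i ∈ range (m+1), tstarharm i (n+1) * x ^ (m+1-i) := by
        rw [← Finset.sum_add_distrib]
        refine Finset.sum_congr rfl fun i hi => ?_
        rw [tpow_succ, mul_add]
      -- B : first sum
      have hB : ∑ i ∈ range (m+1), tstarharm i (n+1) * tpow (m+1-i) n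
          = (m+1 : ℝ) * tstarharm (m+1) n
            + x * ∑ j ∈ range m, tstarharm j (n+1) * tpow (m-j) n := by
        rw [Finset.sum_range_succ' (fun i => tstarharm i (n+1) * tpow (m+1-i) n) m]
        have h0 : tstarharm 0 (n+1) = tstarharm 0 n := rfl
        have hsplit : ∀ j, tstarharm (j+1) (n+1) * tpow (m+1-(j+1)) n
            = tstarharm (j+1) n * tpow (m+1-(j+1)) n
              + x * (tstarharm j (n+1) * tpow (m-j) n) := by
          intro j
          rw [tstar_succ, add_mul]
          have : m + 1 - (j+1) = m - j := by omega
          rw [this]; ring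
        rw [Finset.sum_congr rfl (fun j _ => hsplit j), Finset.sum_add_distrib,
          Finset.mul_sum]
        have hrhs := ihn (m+1)
        push_cast at hrhs
        rw [hrhs, Finset.sum_range_succ' (fun i => tstarharm i n * tpow (m+1-i) n) m, h0]
        ring
      -- inner sum C using inner IH
      have hC : ∑ j ∈ range m, tstarharm j (n+1) * tpow (m-j) n
          = (m : ℝ) * tstarharm m (n+1)
            - ∑ j ∈ range m, tstarharm j (n+1) * x ^ (m-j) := by
        have : ∀ j ∈ range m, tstarharm j (n+1) * tpow (m-j) n
            = tstarharm j (n+1) * tpow (m-j) (n+1) - tstarharm j (n+1) * x ^ (m-j) := by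
          intro j hj
          rw [tpow_succ]; ring
        rw [Finset.sum_congr rfl this, Finset.sum_sub_distrib, ← ihm]
      -- A : second sum
      have hA : ∑ i ∈ range (m+1), tstarharm i (n+1) * x ^ (m+1-i)
          = x * tstarharm m (n+1) + x * ∑ j ∈ range m, tstarharm j (n+1) * x ^ (m-j) := by
        rw [Finset.sum_range_succ]
        have h1 : m + 1 - m = 1 := by omega
        rw [h1, pow_one, Finset.mul_sum]
        have hterm : ∀ j ∈ range m, tstarharm j (n+1) * x ^ (m+1-j)
            = x * (tstarharm j (n+1) * x ^ (m-j)) := by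
          intro j hj
          simp only [Finset.mem_range] at hj
          have : m + 1 - j = (m - j) + 1 := by omega
          rw [this, pow_succ]; ring
        rw [Finset.sum_congr rfl hterm]
        ring
      rw [key, hB, hC, hA, tstar_succ]
      push_cast
      ring

theorem tstarharm_recurrence (m n : ℕ) (hm : 1 ≤ m) (hn : 1 ≤ n) :
    tstarharm m n = (1 / (m : ℝ)) *
      ∑ i ∈ Finset.range m, tstarharm i n * tpow (m - i) n := by
  have h := aux n m
  have hm' : (m : ℝ) ≠ 0 := by positivity
  field_simp
  linarith [h]
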